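/- Let Z₁,…,Z_{n+1} be exchangeable real-valued random variables with almost surely distinct values. Let q be the ⌈(1−ε)(n+1)⌉-th smallest value among Z₁,…,Z_n. Then Pr(Z_{n+1} ≤ q) ≥ 1 − ε. -/
import Mathlib
open MeasureTheory
open scoped ENNReal

namespace SCAux
variable {n : ℕ}

noncomputable def rnk (j : Fin (n+1)) (v : Fin (n+1) → ℝ) : ℕ :=
  (Finset.univ.filter fun i => v i ≤ v j).card

lemma rnk_comp (σ : Equiv.Perm (Fin (n+1))) (j : Fin (n+1)) (v : Fin (n+1) → ℝ) :
    rnk j (v ∘ σ) = rnk (σ j) v := by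
  unfold rnk
  exact Finset.card_equiv σ (by intro i; simp)

lemma one_le_rnk (j : Fin (n+1)) (v : Fin (n+1) → ℝ) : 1 ≤ rnk j v :=
  Finset.card_pos.mpr ⟨j, by simp [rnk]⟩

lemma rnk_le (j : Fin (n+1)) (v : Fin (n+1) → ℝ) : rnk j v ≤ n + 1 := by
  simpa [rnk] using (Finset.card_filter_le (Finset.univ : Finset (Fin (n+1))) _)

lemma rnk_lt_of_lt {j j' : Fin (n+1)} {v : Fin (n+1) → ℝ} (h : v j < v j') :
    rnk j v < rnk j' v := by
  apply Finset.card_lt_card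
  constructor
  · intro i hi
    simp only [Finset.mem_filter, Finset.mem_univ, true_and] at hi ⊢
    exact hi.trans h.le
  · intro hsub
    have := hsub (by simp : j' ∈ Finset.univ.filter fun i => v i ≤ v j')
    simp only [Finset.mem_filter, Finset.mem_univ, true_and] at this
    exact absurd this (not_le.mpr h)

lemma rnk_inj {v : Fin (n+1) → ℝ} (hv : Function.Injective v) :
    Function.Injective (fun j => rnk j v) := by
  intro j j' h
  by_contra hne
  rcases (hv.ne hne).lt_or_gt with hlt | hlt
  · exact absurd h (rnk_lt_of_lt hlt).ne
  · exact absurd h.symm (rnk_lt_of_lt hlt).ne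

lemma rnk_surj {v : Fin (n+1) → ℝ} (hv : Function.Injective v) {r : ℕ}
    (h1 : 1 ≤ r) (h2 : r ≤ n + 1) : ∃ j, rnk j v = r := by
  have himg : Finset.image (fun j => rnk j v) Finset.univ = Finset.Icc 1 (n+1) := by
    apply Finset.eq_of_subset_of_card_le
    · intro r hr
      simp only [Finset.mem_image, Finset.mem_univ, true_and] at hr
      obtain ⟨j, hj⟩ := hr
      rw [Finset.mem_Icc, ← hj]
      exact ⟨one_le_rnk j v, rnk_le j v⟩
    · rw [Nat.card_Icc, Finset.card_image_of_injective _ (rnk_inj hv)]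
      simp
  have : r ∈ Finset.image (fun j => rnk j v) Finset.univ := by
    rw [himg, Finset.mem_Icc]; exact ⟨h1, h2⟩
  simpa using this

lemma measurable_rnk (j : Fin (n+1)) : Measurable (rnk j) := by
  have : rnk j = fun v => ∑ i : Fin (n+1), if v i ≤ v j then 1 else 0 := by
    funext v; unfold rnk; rw [Finset.card_filter]
  rw [this]
  exact Finset.measurable_sum _ fun i _ =>
    Measurable.ite (measurableSet_le (measurable_pi_apply i) (measurable_pi_apply j))
      measurable_const measurable_const

lemma measurableSet_inj :
    MeasurableSet {v : Fin (n+1) → ℝ | Function.Injective v} := by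
  have : {v : Fin (n+1) → ℝ | Function.Injective v}
      = ⋂ (i) (j) (_ : i ≠ j), {v : Fin (n+1) → ℝ | v i ≠ v j} := by
    ext v
    simp only [Set.mem_setOf_eq, Set.mem_iInter]
    constructor
    · intro h i j hij hv; exact hij (h hv)
    · intro h a b hab; by_contra hne; exact h a b hne hab
  rw [this]
  exact MeasurableSet.iInter fun i => MeasurableSet.iInter fun j =>
    MeasurableSet.iInter fun _ =>
      (measurableSet_eq_fun (measurable_pi_apply i) (measurable_pi_apply j)).compl

end SCAux

open SCAux in
theorem split_conformal_coverage {Ω : Type*} [MeasurableSpace Ω]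
    (P : Measure Ω) [IsProbabilityMeasure P]
    (n : ℕ) (hn : 1 ≤ n) (ε : ℝ) (hε : ε ∈ Set.Ioo (0 : ℝ) 1)
    (Z : Fin (n + 1) → Ω → ℝ) (hZ : ∀ i, Measurable (Z i))
    (hexch : ∀ σ : Equiv.Perm (Fin (n + 1)),
      P.map (fun ω => fun i => Z (σ i) ω) = P.map (fun ω => fun i => Z i ω))
    (hdistinct : ∀ᵐ ω ∂P, Function.Injective (fun i => Z i ω))
    (k : ℕ) (hk : k = ⌈(1 - ε) * (n + 1)⌉₊) (hkn : k ≤ n)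
    (q : Ω → ℝ)
    (hq : ∀ ω, q ω = sInf {x : ℝ |
      k ≤ (Finset.univ.filter (fun i : Fin n => Z i.castSucc ω ≤ x)).card}) :
    ENNReal.ofReal (1 - ε) ≤ P {ω | Z (Fin.last n) ω ≤ q ω} := by
  obtain ⟨hε0, hε1⟩ := hε
  set F : Ω → (Fin (n+1) → ℝ) := fun ω i => Z i ω with hF_def
  have hF : Measurable F := measurable_pi_lambda _ hZ
  set μ : Measure (Fin (n+1) → ℝ) := P.map F with hμ_def
  have hinv : ∀ σ : Equiv.Perm (Fin (n+1)), μ.map (fun v => v ∘ σ) = μ := by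
    intro σ
    have hπ : Measurable (fun v : Fin (n+1) → ℝ => v ∘ σ) :=
      measurable_pi_lambda _ fun i => measurable_pi_apply _
    rw [hμ_def, Measure.map_map hπ hF]
    have h1 : (fun v : Fin (n+1) → ℝ => v ∘ σ) ∘ F = fun ω => fun i => Z (σ i) ω := rfl
    rw [h1, hexch σ]
  set I : Set (Fin (n+1) → ℝ) := {v | Function.Injective v} with hI_def
  set E : Fin (n+1) → ℕ → Set (Fin (n+1) → ℝ) :=
    fun j r => I ∩ {v | rnk j v = r} with hE_def
  have hEmeas : ∀ j r, MeasurableSet (E j r) := fun j r =>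
    measurableSet_inj.inter ((measurable_rnk j) (measurableSet_singleton r))
  have hμI : μ I = 1 := by
    rw [hμ_def, Measure.map_apply hF measurableSet_inj]
    rw [← prob_compl_eq_zero_iff (hF measurableSet_inj)]
    rw [ae_iff] at hdistinct
    have hset : (F ⁻¹' I)ᶜ = {ω | ¬ Function.Injective fun i => Z i ω} := rfl
    rw [hset]
    exact hdistinct
  have hEq : ∀ j r, μ (E j r) = μ (E (Fin.last n) r) := by
    intro j r
    set σ := Equiv.swap (Fin.last n) j with hσ
    have hπ : Measurable (fun v : Fin (n+1) → ℝ => v ∘ σ) :=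
      measurable_pi_lambda _ fun i => measurable_pi_apply _
    have hpre : (fun v : Fin (n+1) → ℝ => v ∘ σ) ⁻¹' (E (Fin.last n) r) = E j r := by
      ext v
      simp only [hE_def, Set.mem_preimage, Set.mem_inter_iff, Set.mem_setOf_eq, hI_def]
      rw [rnk_comp, hσ, Equiv.swap_apply_left, Equiv.injective_comp]
    calc μ (E j r) = μ ((fun v => v ∘ σ) ⁻¹' (E (Fin.last n) r)) := by rw [hpre]
      _ = (μ.map (fun v => v ∘ σ)) (E (Fin.last n) r) :=
          (Measure.map_apply hπ (hEmeas _ _)).symm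
      _ = μ (E (Fin.last n) r) := by rw [hinv σ]
  have hdisj : ∀ r : ℕ, Pairwise (Function.onFun Disjoint fun j => E j r) := by
    intro r j j' hjj'
    refine Set.disjoint_left.mpr ?_
    rintro v ⟨hvI, hvr⟩ ⟨hvI', hvr'⟩
    exact hjj' (rnk_inj hvI (show rnk j v = rnk j' v from hvr.trans hvr'.symm))
  have hunion : ∀ r : ℕ, 1 ≤ r → r ≤ n + 1 → (⋃ j, E j r) = I := by
    intro r h1 h2
    apply Set.Subset.antisymm
    · exact Set.iUnion_subset fun j => Set.inter_subset_left
    · intro v hv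
      obtain ⟨j, hj⟩ := rnk_surj hv h1 h2
      exact Set.mem_iUnion.mpr ⟨j, hv, hj⟩
  have hp : ∀ r : ℕ, 1 ≤ r → r ≤ n + 1 →
      μ (E (Fin.last n) r) = ((n:ℝ≥0∞)+1)⁻¹ := by
    intro r h1 h2
    have hsum : ∑' j : Fin (n+1), μ (E j r) = 1 := by
      rw [← measure_iUnion (hdisj r) (fun j => hEmeas j r), hunion r h1 h2, hμI]
    rw [tsum_fintype] at hsum
    have hsum3 : ∑ j : Fin (n+1), μ (E j r) = ((n:ℝ≥0∞)+1) * μ (E (Fin.last n) r) := by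
      rw [Finset.sum_congr rfl (fun j _ => hEq j r), Finset.sum_const,
        Finset.card_univ, Fintype.card_fin, nsmul_eq_mul]
      congr 1
      push_cast
      ring
    rw [hsum3] at hsum
    have hsum2 : ((n:ℝ≥0∞)+1) * μ (E (Fin.last n) r) = 1 := hsum
    have hne : ((n:ℝ≥0∞)+1) ≠ 0 := by simp
    have hnt : ((n:ℝ≥0∞)+1) ≠ ⊤ := by simp [ENNReal.add_eq_top]
    calc μ (E (Fin.last n) r)
        = ((n:ℝ≥0∞)+1)⁻¹ * (((n:ℝ≥0∞)+1) * μ (E (Fin.last n) r)) := by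
          rw [← mul_assoc, ENNReal.inv_mul_cancel hne hnt, one_mul]
      _ = ((n:ℝ≥0∞)+1)⁻¹ := by rw [hsum2, mul_one]
  set S : Set (Fin (n+1) → ℝ) := I ∩ {v | rnk (Fin.last n) v ≤ k} with hS_def
  have hSmeas : MeasurableSet S :=
    measurableSet_inj.inter ((measurable_rnk _) measurableSet_Iic)
  have hSμ : μ S = (k : ℝ≥0∞) * ((n:ℝ≥0∞)+1)⁻¹ := by
    have hSeq : S = ⋃ r ∈ Finset.Icc 1 k, E (Fin.last n) r := by
      ext v
      simp only [hS_def, hE_def, Set.mem_inter_iff, Set.mem_setOf_eq, Set.mem_iUnion,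
        Finset.mem_Icc, exists_prop]
      constructor
      · rintro ⟨hvI, hvk⟩
        exact ⟨rnk (Fin.last n) v, ⟨one_le_rnk _ _, hvk⟩, hvI, rfl⟩
      · rintro ⟨r, ⟨h1, h2⟩, hvI, hr⟩
        exact ⟨hvI, hr ▸ h2⟩
    rw [hSeq, measure_biUnion_finset ?_ (fun r _ => hEmeas _ r)]
    · rw [Finset.sum_congr rfl (fun r hr => hp r (Finset.mem_Icc.mp hr).1
        (le_trans (Finset.mem_Icc.mp hr).2 (by omega))), Finset.sum_const,
        Nat.card_Icc, nsmul_eq_mul]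
      simp
    · intro r hr r' hr' hrr'
      refine Set.disjoint_left.mpr ?_
      rintro v ⟨hvI, hvr⟩ ⟨hvI', hvr'⟩
      exact hrr' (hvr ▸ hvr')
  have hsub : F ⁻¹' S ⊆ {ω | Z (Fin.last n) ω ≤ q ω} := by
    intro ω hω
    obtain ⟨hinj, hrk⟩ := hω
    set c : ℝ → ℕ := fun x =>
      (Finset.univ.filter fun i : Fin n => Z i.castSucc ω ≤ x).card with hc_def
    have hcount : ∀ x, c x = ∑ i : Fin n, if Z i.castSucc ω ≤ x then 1 else 0 :=
      fun x => Finset.card_filter _ _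
    have hrnk_eq : rnk (Fin.last n) (F ω) = c (Z (Fin.last n) ω) + 1 := by
      unfold rnk
      rw [Finset.card_filter, Fin.sum_univ_castSucc, hcount]
      simp [hF_def]
    have hrk' : rnk (Fin.last n) (F ω) ≤ k := hrk
    have hclt : c (Z (Fin.last n) ω) < k := by omega
    have hmono : ∀ x y, x ≤ y → c x ≤ c y := by
      intro x y hxy
      apply Finset.card_le_card
      intro i hi
      simp only [Finset.mem_filter, Finset.mem_univ, true_and] at hi ⊢
      exact hi.trans hxy
    have : Z (Fin.last n) ω ≤ q ω := by
      rw [hq ω]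
      haveI : Nonempty (Fin n) := ⟨⟨0, hn⟩⟩
      apply le_csInf
      · refine ⟨Finset.univ.sup' Finset.univ_nonempty (fun i : Fin n => Z i.castSucc ω), ?_⟩
        show k ≤ _
        have hfull : (Finset.univ.filter fun i : Fin n => Z i.castSucc ω ≤
            Finset.univ.sup' Finset.univ_nonempty (fun i : Fin n => Z i.castSucc ω))
            = Finset.univ := by
          ext i
          simp only [Finset.mem_filter, Finset.mem_univ, true_and, iff_true]
          exact Finset.le_sup' (fun i : Fin n => Z i.castSucc ω) (Finset.mem_univ i)
        rw [hfull, Finset.card_univ, Fintype.card_fin]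
        omega
      · intro x hx
        by_contra hlt
        push_neg at hlt
        have h1 : c x ≤ c (Z (Fin.last n) ω) := hmono _ _ hlt.le
        have h2 : k ≤ c x := hx
        omega
    exact this
  have hkreal : (1 - ε) * ((n:ℝ) + 1) ≤ (k : ℝ) := by
    rw [hk]; exact Nat.le_ceil _
  have hnpos : (0:ℝ) < (n:ℝ) + 1 := by positivity
  have hnum : ENNReal.ofReal (1 - ε) ≤ (k : ℝ≥0∞) * ((n:ℝ≥0∞)+1)⁻¹ := by
    have hdiv : 1 - ε ≤ (k : ℝ) / ((n:ℝ) + 1) := by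
      rw [le_div_iff₀ hnpos]; exact hkreal
    calc ENNReal.ofReal (1 - ε) ≤ ENNReal.ofReal ((k:ℝ) / ((n:ℝ) + 1)) :=
          ENNReal.ofReal_le_ofReal hdiv
      _ = (k : ℝ≥0∞) * ((n:ℝ≥0∞)+1)⁻¹ := by
          rw [ENNReal.ofReal_div_of_pos hnpos, div_eq_mul_inv]
          congr 1
          · exact ENNReal.ofReal_natCast k
          · congr 1
            rw [show ((n:ℝ) + 1) = ((n+1 : ℕ) : ℝ) by push_cast; ring,
              ENNReal.ofReal_natCast]
            push_cast
            ring
  calc ENNReal.ofReal (1 - ε) ≤ (k : ℝ≥0∞) * ((n:ℝ≥0∞)+1)⁻¹ := hnum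
    _ = μ S := hSμ.symm
    _ = P (F ⁻¹' S) := by rw [hμ_def, Measure.map_apply hF hSmeas]
    _ ≤ P {ω | Z (Fin.last n) ω ≤ q ω} := measure_mono hsub
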